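/- Let A ⊆ ℝ^d (d ≥ 1) be a non-meager Baire set, and let F = {v_i}_{i ∈ ℕ} be a bounded sequence in ℝ^d (i.e., sup_i ‖v_i‖ < ∞). Then the set Δ_F(A) = {t ∈ ℝ : ∃ z ∈ ℝ^d such that t·v_i + z ∈ A for all i ∈ ℕ} has nonempty interior in ℝ. -/

import Mathlib

open Set

lemma not_isMeagre_of_isOpen_nonempty {X : Type*} [TopologicalSpace X] [BaireSpace X]
    {U : Set X} (hU : IsOpen U) (hne : U.Nonempty) : ¬ IsMeagre U := by
  intro h
  have hd : Dense Uᶜ := dense_of_mem_residual h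
  obtain ⟨x, hx1, hx2⟩ := hd.inter_open_nonempty U hU hne
  exact hx2 hx1

/-- If `A ⊆ ℝ^d` (`d ≥ 1`) is a non-meager set with the Baire property and
`F = {v i}_{i ∈ ℕ}` is a bounded sequence in `ℝ^d`, then
`Δ_F(A) = {t : ∃ z, ∀ i, t • v i + z ∈ A}` has nonempty interior in `ℝ`. -/
theorem deltaF_nonempty_interior_euclidean
    (d : ℕ) (hd : 1 ≤ d) (A : Set (EuclideanSpace ℝ (Fin d)))
    (hA_nonmeager : ¬ IsMeagre A)
    (hA_baire : ∃ U : Set (EuclideanSpace ℝ (Fin d)), IsOpen U ∧ IsMeagre (symmDiff A U))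
    (v : ℕ → EuclideanSpace ℝ (Fin d))
    (hv : ∃ C : ℝ, ∀ i, ‖v i‖ ≤ C) :
    (interior {t : ℝ | ∃ z : EuclideanSpace ℝ (Fin d), ∀ i : ℕ, t • v i + z ∈ A}).Nonempty := by
  obtain ⟨U, hUopen, hP⟩ := hA_baire
  obtain ⟨C, hC⟩ := hv
  have hC0 : 0 ≤ C := le_trans (norm_nonneg (v 0)) (hC 0)
  -- U is nonempty
  have hUA : IsMeagre (U \ A) := hP.mono (fun x hx => by
    simp [symmDiff_def] at *; tauto)
  have hAU : IsMeagre (A \ U) := hP.mono (fun x hx => by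
    simp [symmDiff_def] at *; tauto)
  have hUne : U.Nonempty := by
    rcases U.eq_empty_or_nonempty with h | h
    · exfalso
      apply hA_nonmeager
      have : A ⊆ A \ U := by simp [h]
      exact hAU.mono this
    · exact h
  obtain ⟨x, hx⟩ := hUne
  obtain ⟨r, hr, hball⟩ := Metric.isOpen_iff.mp hUopen x hx
  set ε : ℝ := r / (2 * (C + 1)) with hε
  have hεpos : 0 < ε := by positivity
  have hsub : Ioo (-ε) ε ⊆ {t : ℝ | ∃ z : EuclideanSpace ℝ (Fin d), ∀ i : ℕ, t • v i + z ∈ A} := by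
    intro t ht
    have htabs : |t| < ε := abs_lt.mpr ⟨ht.1, ht.2⟩
    -- key bound : ‖t • v i‖ < r / 2
    have hkey : ∀ i, ‖t • v i‖ < r / 2 := by
      intro i
      calc ‖t • v i‖ = |t| * ‖v i‖ := by rw [norm_smul, Real.norm_eq_abs]
        _ ≤ |t| * C := by
            exact mul_le_mul_of_nonneg_left (hC i) (abs_nonneg t)
        _ ≤ |t| * (C + 1) := mul_le_mul_of_nonneg_left (by linarith) (abs_nonneg t)
        _ < ε * (C + 1) := mul_lt_mul_of_pos_right htabs (by linarith)
        _ = r / 2 := by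
            field_simp [hε]
            rw [hε]
            linear_combination div_mul_cancel₀ r (ne_of_gt (show (0:ℝ) < 2 * (C + 1) by linarith))
    -- bad set is meager
    have hbad : IsMeagre (⋃ i, (fun z : EuclideanSpace ℝ (Fin d) => t • v i + z) ⁻¹' (U \ A)) := by
      apply isMeagre_iUnion
      intro i
      exact hUA.preimage_of_isOpenMap (continuous_const.add continuous_id)
        (Homeomorph.addLeft (t • v i)).isOpenMap
    -- the small ball is non-meager
    have hne : ¬ IsMeagre (Metric.ball x (r / 2)) :=
      not_isMeagre_of_isOpen_nonempty Metric.isOpen_ball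
        (Metric.nonempty_ball.mpr (by linarith))
    have hz : ∃ z, z ∈ Metric.ball x (r / 2) ∧
        z ∉ ⋃ i, (fun z : EuclideanSpace ℝ (Fin d) => t • v i + z) ⁻¹' (U \ A) := by
      by_contra h
      push_neg at h
      exact hne (hbad.mono h)
    obtain ⟨z, hz1, hz2⟩ := hz
    refine ⟨z, fun i => ?_⟩
    have hmem : t • v i + z ∈ U := by
      apply hball
      rw [Metric.mem_ball] at hz1 ⊢
      calc dist (t • v i + z) x ≤ dist (t • v i + z) z + dist z x := dist_triangle _ _ _
        _ < r / 2 + r / 2 := by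
            apply add_lt_add _ hz1
            simpa [dist_eq_norm] using hkey i
        _ = r := by ring
    have : z ∉ (fun z : EuclideanSpace ℝ (Fin d) => t • v i + z) ⁻¹' (U \ A) := by
      intro h
      exact hz2 (mem_iUnion.mpr ⟨i, h⟩)
    simp only [mem_preimage, mem_diff, not_and, not_not] at this
    exact this hmem
  have hIoo : Ioo (-ε) ε ⊆ interior {t : ℝ | ∃ z : EuclideanSpace ℝ (Fin d), ∀ i : ℕ, t • v i + z ∈ A} :=
    interior_maximal hsub isOpen_Ioo
  exact ⟨0, hIoo ⟨by linarith, hεpos⟩⟩
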